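/- The function δ(n) = s(n, π/2) − π(n) is nonincreasing for n > 4, where s(n,x) = Σ_{k=1}^n sin²(x·(k-1)!/k) and π(n) is the prime counting function. -/

import Mathlib

noncomputable def s (n : ℕ) (x : ℝ) : ℝ :=
  ∑ k ∈ Finset.Icc 1 n, Real.sin (x * (k - 1).factorial / k) ^ 2

lemma two_distinct_dvd_factorial {x y n : ℕ} (hx : 0 < x) (hxy : x < y) (hyn : y ≤ n) :
    x * y ∣ n.factorial := by
  have h1 : x ∣ (y - 1).factorial := Nat.dvd_factorial hx (by omega)
  have h2 : x * y ∣ y.factorial := by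
    have hy : y.factorial = y * (y - 1).factorial := by
      conv_lhs => rw [show y = (y - 1) + 1 by omega]
      rw [Nat.factorial_succ]
      congr 1
      omega
    rw [hy, mul_comm x y]
    exact mul_dvd_mul_left y h1
  exact h2.trans (Nat.factorial_dvd_factorial hyn)

lemma composite_dvd {k : ℕ} (hk : 4 < k) (hnp : ¬ k.Prime) : 2 * k ∣ (k - 1).factorial := by
  set p := k.minFac with hp
  have hpp : p.Prime := Nat.minFac_prime (by omega)
  have hpd : p ∣ k := Nat.minFac_dvd k
  set b := k / p with hb
  have hpb : p * b = k := Nat.mul_div_cancel' hpd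
  have hple : p ≤ b := Nat.minFac_le_div (by omega) hnp
  have hp2 : 2 ≤ p := hpp.two_le
  have hb2 : 2 ≤ b := by nlinarith
  rcases eq_or_lt_of_le hple with heq | hlt
  · -- k = p^2, p ≥ 3
    have hp3 : 3 ≤ p := by nlinarith
    have : p * (2 * p) ∣ (k - 1).factorial := by
      have h : 2 * p + 1 ≤ k := by nlinarith
      apply two_distinct_dvd_factorial (by omega) (by omega) (by omega)
    have e : p * (2 * p) = 2 * k := by rw [← hpb, ← heq]; ring
    rwa [e] at this
  · rcases Nat.lt_or_ge 2 p with hp3 | hp2'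
    · -- p ≥ 3, p < b
      have : p * (2 * b) ∣ (k - 1).factorial := by
        have h : 2 * b + 1 ≤ k := by nlinarith
        apply two_distinct_dvd_factorial (by omega) (by omega) (by omega)
      have e : p * (2 * b) = 2 * k := by rw [← hpb]; ring
      rwa [e] at this
    · -- p = 2, k = 2*b, b ≥ 3
      have hpe : p = 2 := by omega
      rw [hpe] at hpb
      have hk2b : k = 2 * b := by omega
      rcases lt_trichotomy b 4 with h4 | h4 | h4
      · -- b = 3, k = 6
        have : k = 6 := by omega
        subst this
        decide
      · -- b = 4, k = 8
        have : k = 8 := by omega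
        subst this
        decide
      · -- b > 4 : use 4 and b
        have : 4 * b ∣ (k - 1).factorial :=
          two_distinct_dvd_factorial (by omega) h4 (by omega)
        have e : 4 * b = 2 * k := by omega
        rwa [e] at this

lemma term_zero {k : ℕ} (hk : 4 < k) (hnp : ¬ k.Prime) :
    Real.sin (Real.pi / 2 * (k - 1).factorial / k) ^ 2 = 0 := by
  obtain ⟨t, ht⟩ := composite_dvd hk hnp
  have hk0 : (k : ℝ) ≠ 0 := by positivity
  have : Real.pi / 2 * ((k - 1).factorial : ℝ) / k = t * Real.pi := by
    rw [ht]
    push_cast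
    field_simp
  rw [this, Real.sin_nat_mul_pi]
  norm_num

theorem stmt_5 (n m : ℕ) (hn : 4 < n) (hnm : n ≤ m) :
    s m (Real.pi / 2) - Nat.primeCounting m
      ≤ s n (Real.pi / 2) - Nat.primeCounting n := by
  induction m, hnm using Nat.le_induction with
  | base => exact le_refl _
  | succ m hm ih =>
    have hs : s (m + 1) (Real.pi / 2)
        = s m (Real.pi / 2)
          + Real.sin (Real.pi / 2 * (m + 1 - 1).factorial / ((m + 1 : ℕ) : ℝ)) ^ 2 := by
      unfold s
      rw [Finset.sum_Icc_succ_top (M := ℝ) (by omega : 1 ≤ m + 1)]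
    have hπ : (Nat.primeCounting (m + 1) : ℝ)
        = Nat.primeCounting m + if Nat.Prime (m + 1) then (1 : ℝ) else 0 := by
      simp [Nat.primeCounting, Nat.primeCounting', Nat.count_succ]
    rw [hs, hπ]
    have hterm : Real.sin (Real.pi / 2 * (m + 1 - 1).factorial / ((m + 1 : ℕ) : ℝ)) ^ 2
        ≤ if Nat.Prime (m + 1) then (1 : ℝ) else 0 := by
      split_ifs with h
      · exact Real.sin_sq_le_one _
      · exact le_of_eq (term_zero (by omega) h)
    linarith
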